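/- Let d ≥ 1, p a prime with p > d, and let r be the least nonnegative residue of p mod d. Define the n×n matrix r_n = (r_{ij})_{1≤i,j≤n} with r_{ij} = d·⌈(ri − j)/d⌉ − (ri − j), so that r_{ij} is the least nonnegative residue of −(ri − j) ≡ j − ri mod d, equivalently the least nonnegative residue of j − ip mod d. Then for any permutation σ_0 of {1,…,n} satisfying σ_0(i) = k whenever r_{ik} = 0, one has r_{ij} − r_{i,σ_0(i)} ≥ j − σ_0(i) for all 1 ≤ i, j ≤ n. -/

import Mathlib

lemma ceil_mod_aux (d : ℕ) (hd : 1 ≤ d) (x : ℤ) :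
    (d : ℤ) * ⌈((x : ℤ) : ℚ) / (d : ℚ)⌉ - x = (-x) % (d : ℤ) := by
  have h1 : ⌈((x : ℤ) : ℚ) / (d : ℚ)⌉ = -⌊((-x : ℤ) : ℚ) / (d : ℚ)⌋ := by
    rw [show ((x : ℤ) : ℚ) / (d : ℚ) = -(((-x : ℤ) : ℚ) / (d : ℚ)) by push_cast; ring,
      Int.ceil_neg]
  rw [h1, Rat.floor_intCast_div_natCast, Int.emod_def]
  ring

/-- Let `p > d` be prime, `r = p % d`, `1 ≤ n ≤ d`, and (1-indexed via `i.1+1`)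
`r_{ij} = d·⌈(r·i − j)/d⌉ − (r·i − j)`, the least nonnegative residue of
`j − r·i ≡ j − i·p (mod d)`.  If a permutation `σ₀` of `{1,…,n}` satisfies
`σ₀(i) = k` whenever `r_{ik} = 0`, then `r_{ij} − r_{i,σ₀(i)} ≥ j − σ₀(i)`
for all `i, j`. -/
theorem stmt11 (d p n : ℕ) (hd : 1 ≤ d) (hp : p.Prime) (hdp : d < p)
    (hn : 1 ≤ n) (hnd : n ≤ d) (r : ℕ) (hr : r = p % d)
    (R : Fin n → Fin n → ℤ)
    (hR : ∀ i j : Fin n,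
      R i j = d * ⌈((r * (i.1 + 1) - (j.1 + 1) : ℤ) : ℚ) / (d : ℚ)⌉
        - (r * (i.1 + 1) - (j.1 + 1) : ℤ))
    (σ : Equiv.Perm (Fin n)) (hσ : ∀ i k : Fin n, R i k = 0 → σ i = k) :
    ∀ i j : Fin n, ((j.1 : ℤ) + 1) - (((σ i).1 : ℤ) + 1) ≤ R i j - R i (σ i) := by
  intro i j
  have hdz : (0 : ℤ) < (d : ℤ) := by exact_mod_cast hd
  have hRmod : ∀ k : Fin n,
      R i k = (((k.1 : ℤ) + 1) - r * (i.1 + 1)) % (d : ℤ) := by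
    intro k
    rw [hR i k, ceil_mod_aux d hd]
    congr 1
    ring
  have hdvd : ∀ k : Fin n, (d : ℤ) ∣ R i k - (((k.1 : ℤ) + 1) - r * (i.1 + 1)) := by
    intro k
    rw [hRmod k, Int.emod_def]
    exact ⟨-((((k.1 : ℤ) + 1) - r * (i.1 + 1)) / d), by ring⟩
  set a := R i j with ha
  set b := R i (σ i) with hb
  have ha0 : 0 ≤ a := by rw [ha, hRmod]; exact Int.emod_nonneg _ (by omega)
  have had : a < d := by rw [ha, hRmod]; exact Int.emod_lt_of_pos _ hdz
  have hb0 : 0 ≤ b := by rw [hb, hRmod]; exact Int.emod_nonneg _ (by omega)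
  have hbd : b < d := by rw [hb, hRmod]; exact Int.emod_lt_of_pos _ hdz
  by_contra hcon
  push_neg at hcon
  -- d ∣ (a - b) - ((j+1) - (σ i +1))
  have hdvd2 : (d : ℤ) ∣ (a - b) - (((j.1 : ℤ) + 1) - (((σ i).1 : ℤ) + 1)) := by
    have h1 := hdvd j
    have h2 := hdvd (σ i)
    have : (d : ℤ) ∣ _ := dvd_sub h1 h2
    convert this using 1
    ring
  obtain ⟨t, htt⟩ := hdvd2
  have hjn : (j.1 : ℤ) ≤ n - 1 := by
    have := j.2; omega
  have hsn : (0 : ℤ) ≤ ((σ i).1 : ℤ) := by positivity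
  have hnd' : (n : ℤ) ≤ d := by exact_mod_cast hnd
  have ht1 : t ≤ -1 := by nlinarith
  have hkey : a - b ≤ ((j.1 : ℤ) - ((σ i).1 : ℤ)) - d := by nlinarith
  -- so b ≥ d - (j - σi) ≥ 1, and σi + (d - b) ≤ j
  have hb1 : 1 ≤ b := by omega
  have hk0j : ((σ i).1 : ℤ) + (d - b) ≤ (j.1 : ℤ) := by omega
  have hbtoNat : (b.toNat : ℤ) = b := Int.toNat_of_nonneg hb0
  set k0 : ℕ := (σ i).1 + d - b.toNat with hk0
  have hk0lt : k0 < n := by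
    have := j.2
    omega
  set K : Fin n := ⟨k0, hk0lt⟩ with hK
  have hRK : R i K = 0 := by
    rw [hRmod K]
    apply Int.emod_eq_zero_of_dvd
    have h2 := hdvd (σ i)
    have hKk : ((K.1 : ℤ) + 1) - r * (i.1 + 1)
        = -(b - ((((σ i).1 : ℤ) + 1) - r * (i.1 + 1))) + (d - b) + b := by
      simp only [hK, hk0]
      push_cast
      omega
    rw [hKk]
    have : -(b - ((((σ i).1 : ℤ) + 1) - r * (i.1 + 1))) + (d - b) + b
        = -(b - ((((σ i).1 : ℤ) + 1) - r * (i.1 + 1))) + d := by ring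
    rw [this]
    exact dvd_add ((dvd_neg).mpr h2) (dvd_refl _)
  have := hσ i K hRK
  have : (σ i).1 = k0 := by rw [this]
  omega
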